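/- (Convergence rate of the Sinkhorn gradient, Proposition 4.3) Let K ∈ ℝ_{>0}^{R1×R2} be entrywise positive, let μ, ν be entrywise positive probability vectors, and let v^{(0)}, v^{(1)}, v^{(2)}, … be the second scaling vectors produced by the Sinkhorn iterations u^{(t+1)} = μ ./ (K v^{(t)}), v^{(t+1)} = ν ./ (Kᵀ u^{(t+1)}), converging to a fixed point (u*, v*). Define the approximate gradient after t iterations as g^{(t)} = ε log v^{(t)} and the true gradient as g = ε log v* (logarithms elementwise), with ε > 0. Then for every t with ‖g^{(t)} − g‖_var > 0, ‖g^{(t+1)} − g‖_var / ‖g^{(t)} − g‖_var ≤ κ(K)², where ‖w‖_var = max_i w_i − min_i w_i and κ(K) = (√ψ(K) − 1)/(√ψ(K) + 1) with ψ(K) = max_{i,j,k,l} (K_{ik} K_{jl})/(K_{jk} K_{il}). -/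

import Mathlib

noncomputable section

open Finset

/-- The variation seminorm `‖w‖_var = max_i w_i - min_i w_i`. -/
def varSeminorm {R : ℕ} (w : Fin R → ℝ) : ℝ :=
  (⨆ i, w i) - ⨅ i, w i

/-- `ψ(K) = max_{i,j,k,l} (K_{ik} K_{jl})/(K_{jk} K_{il})` for a positive matrix `K`. -/
def psiK {R1 R2 : ℕ} (K : Matrix (Fin R1) (Fin R2) ℝ) : ℝ :=
  ⨆ i, ⨆ j, ⨆ k, ⨆ l, K i k * K j l / (K j k * K i l)

/-- The Birkhoff contraction constant `κ(K) = (√ψ(K) - 1)/(√ψ(K) + 1)`. -/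
def kappaK {R1 R2 : ℕ} (K : Matrix (Fin R1) (Fin R2) ℝ) : ℝ :=
  (Real.sqrt (psiK K) - 1) / (Real.sqrt (psiK K) + 1)

lemma two_point (c s t : ℝ) (hc : 1 ≤ c) (ht0 : 0 ≤ t)
    (h : s * (1 - t) ≤ c^2 * (t * (1 - s))) : s - t ≤ (c - 1)/(c + 1) := by
  rw [le_div_iff₀ (by linarith : (0:ℝ) < c + 1)]
  have hE : 0 ≤ c^2*(t*(1-s)) - s*(1-t) := by linarith
  have key : (1+(c^2-1)*t)*((t-s)*(c+1)+(c-1))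
      = (c-1)*(1-(c+1)*t)^2 + (c+1)*(c^2*(t*(1-s)) - s*(1-t)) := by ring
  have h1 : 0 < 1+(c^2-1)*t := by nlinarith [mul_nonneg (by nlinarith : (0:ℝ) ≤ c^2-1) ht0]
  have h3 : 0 ≤ (1+(c^2-1)*t)*((t-s)*(c+1)+(c-1)) := by
    rw [key]
    have := mul_nonneg (sub_nonneg.2 hc) (sq_nonneg (1 - (c+1)*t))
    nlinarith
  have h2 : 0 ≤ (t-s)*(c+1)+(c-1) := (mul_nonneg_iff_of_pos_left h1).mp h3
  linarith

lemma avg_diff_le {R : ℕ} [Nonempty (Fin R)] (p q : Fin R → ℝ) (ψ : ℝ)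
    (hp : ∀ k, 0 < p k) (hq : ∀ k, 0 < q k)
    (hps : ∑ k, p k = 1) (hqs : ∑ k, q k = 1)
    (hψ : ∀ k l, p k * q l ≤ ψ * (q k * p l)) (a : Fin R → ℝ) :
    ∑ k, p k * a k - ∑ k, q k * a k ≤
      (Real.sqrt ψ - 1)/(Real.sqrt ψ + 1) * ((⨆ k, a k) - ⨅ k, a k) := by
  have hψ1 : 1 ≤ ψ := by
    have k0 : Fin R := Classical.arbitrary _
    have := hψ k0 k0
    have hpq : 0 < q k0 * p k0 := mul_pos (hq k0) (hp k0)
    nlinarith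
  set c := Real.sqrt ψ with hc
  have hc1 : 1 ≤ c := by
    rw [hc, show (1:ℝ) = Real.sqrt 1 by simp]
    exact Real.sqrt_le_sqrt hψ1
  have hc2 : c^2 = ψ := Real.sq_sqrt (by linarith)
  set S : Finset (Fin R) := univ.filter (fun k => q k < p k) with hS
  set s := ∑ k ∈ S, p k with hs
  set t := ∑ k ∈ S, q k with ht
  have hsc : ∑ k ∈ Sᶜ, p k = 1 - s := by
    have := Finset.sum_add_sum_compl S p; rw [hps] at this; linarith
  have htc : ∑ k ∈ Sᶜ, q k = 1 - t := by
    have := Finset.sum_add_sum_compl S q; rw [hqs] at this; linarith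
  have ht0 : 0 ≤ t := Finset.sum_nonneg (fun k _ => (hq k).le)
  have hagg : s * (1 - t) ≤ ψ * (t * (1 - s)) := by
    rw [← hsc, ← htc] at *
    calc (∑ k ∈ S, p k) * ∑ l ∈ Sᶜ, q l = ∑ k ∈ S, ∑ l ∈ Sᶜ, p k * q l := by
          rw [Finset.sum_mul]; exact Finset.sum_congr rfl (fun k _ => Finset.mul_sum _ _ _)
      _ ≤ ∑ k ∈ S, ∑ l ∈ Sᶜ, ψ * (q k * p l) :=
          Finset.sum_le_sum (fun k _ => Finset.sum_le_sum (fun l _ => hψ k l))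
      _ = ψ * ((∑ k ∈ S, q k) * ∑ l ∈ Sᶜ, p l) := by
          simp only [Finset.mul_sum, Finset.sum_mul]
          rw [Finset.sum_comm]
  have hst : s - t ≤ (c - 1)/(c + 1) := two_point c s t hc1 ht0 (by rw [hc2]; exact hagg)
  have hst0 : 0 ≤ s - t := by
    rw [hs, ht, ← Finset.sum_sub_distrib]
    exact Finset.sum_nonneg (fun k hk => by
      have : q k < p k := (Finset.mem_filter.mp hk).2; linarith)
  have hbddA : BddAbove (Set.range a) := Finite.bddAbove_range a
  have hbddB : BddBelow (Set.range a) := Finite.bddBelow_range a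
  have hM : ∀ k, a k ≤ ⨆ j, a j := fun k => le_ciSup hbddA k
  have hm : ∀ k, ⨅ j, a j ≤ a k := fun k => ciInf_le hbddB k
  set M := ⨆ j, a j
  set m := ⨅ j, a j
  have hMm : m ≤ M := le_trans (hm (Classical.arbitrary _)) (hM _)
  have main : ∑ k, p k * a k - ∑ k, q k * a k ≤ (s - t) * (M - m) := by
    have split : ∑ k, p k * a k - ∑ k, q k * a k
        = ∑ k ∈ S, (p k - q k) * a k + ∑ k ∈ Sᶜ, (p k - q k) * a k := by
      rw [Finset.sum_add_sum_compl S (fun k => (p k - q k) * a k), ← Finset.sum_sub_distrib]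
      exact Finset.sum_congr rfl (fun k _ => by ring)
    rw [split]
    have h1 : ∑ k ∈ S, (p k - q k) * a k ≤ ∑ k ∈ S, (p k - q k) * M :=
      Finset.sum_le_sum (fun k hk => by
        have : q k < p k := (Finset.mem_filter.mp hk).2
        exact mul_le_mul_of_nonneg_left (hM k) (by linarith))
    have h2 : ∑ k ∈ Sᶜ, (p k - q k) * a k ≤ ∑ k ∈ Sᶜ, (p k - q k) * m :=
      Finset.sum_le_sum (fun k hk => by
        have hk' : ¬ q k < p k := by
          have := Finset.mem_compl.mp hk
          simp [hS] at this; linarith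
        have hle : p k - q k ≤ 0 := by push_neg at hk'; linarith
        nlinarith [hm k])
    have e1 : ∑ k ∈ S, (p k - q k) * M = (s - t) * M := by
      rw [← Finset.sum_mul, Finset.sum_sub_distrib]
    have e2 : ∑ k ∈ Sᶜ, (p k - q k) * m = (t - s) * m := by
      rw [← Finset.sum_mul, Finset.sum_sub_distrib, hsc, htc]; ring
    calc _ ≤ (s - t) * M + (t - s) * m := by rw [← e1, ← e2]; exact add_le_add h1 h2
      _ = (s - t) * (M - m) := by ring
  calc ∑ k, p k * a k - ∑ k, q k * a k ≤ (s - t) * (M - m) := main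
    _ ≤ (c - 1)/(c + 1) * (M - m) := mul_le_mul_of_nonneg_right hst (by linarith)

lemma varSeminorm_le {R : ℕ} [Nonempty (Fin R)] {f : Fin R → ℝ} {C : ℝ}
    (h : ∀ i j, f i - f j ≤ C) : varSeminorm f ≤ C := by
  obtain ⟨j0, hj0⟩ := Finite.exists_min f
  have hinf : ⨅ i, f i = f j0 :=
    le_antisymm (ciInf_le (Finite.bddBelow_range f) j0) (le_ciInf hj0)
  rw [varSeminorm, hinf, sub_le_iff_le_add]
  exact ciSup_le (fun i => by have := h i j0; linarith)

lemma sub_le_varSeminorm {R : ℕ} [Nonempty (Fin R)] (f : Fin R → ℝ) (i j : Fin R) :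
    f i - f j ≤ varSeminorm f :=
  sub_le_sub (le_ciSup (Finite.bddAbove_range f) i) (ciInf_le (Finite.bddBelow_range f) j)

lemma varSeminorm_const_mul {R : ℕ} [Nonempty (Fin R)] (f : Fin R → ℝ) {c : ℝ} (hc : 0 ≤ c) :
    varSeminorm (fun i => c * f i) = c * varSeminorm f := by
  obtain ⟨i0, hi0⟩ := Finite.exists_max f
  obtain ⟨j0, hj0⟩ := Finite.exists_min f
  have hsup : ⨆ i, f i = f i0 := le_antisymm (ciSup_le hi0) (le_ciSup (Finite.bddAbove_range f) i0)
  have hinf : ⨅ i, f i = f j0 := le_antisymm (ciInf_le (Finite.bddBelow_range f) j0) (le_ciInf hj0)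
  have hsup' : ⨆ i, c * f i = c * f i0 :=
    le_antisymm (ciSup_le fun i => mul_le_mul_of_nonneg_left (hi0 i) hc)
      (le_ciSup (f := fun i => c * f i) (Finite.bddAbove_range _) i0)
  have hinf' : ⨅ i, c * f i = c * f j0 :=
    le_antisymm (ciInf_le (f := fun i => c * f i) (Finite.bddBelow_range _) j0)
      (le_ciInf fun i => mul_le_mul_of_nonneg_left (hj0 i) hc)
  rw [varSeminorm, varSeminorm, hsup, hinf, hsup', hinf']; ring

lemma le_psiK {R1 R2 : ℕ} (K : Matrix (Fin R1) (Fin R2) ℝ) (i j : Fin R1) (k l : Fin R2) :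
    K i k * K j l / (K j k * K i l) ≤ psiK K := by
  refine le_trans (le_ciSup (Finite.bddAbove_range fun l' => K i k * K j l' / (K j k * K i l')) l) ?_
  refine le_trans (le_ciSup (Finite.bddAbove_range fun k' => ⨆ l', K i k' * K j l' / (K j k' * K i l')) k) ?_
  refine le_trans (le_ciSup (Finite.bddAbove_range fun j' => ⨆ k', ⨆ l', K i k' * K j' l' / (K j' k' * K i l')) j) ?_
  exact le_ciSup (Finite.bddAbove_range fun i' => ⨆ j', ⨆ k', ⨆ l', K i' k' * K j' l' / (K j' k' * K i' l')) i

lemma psiK_le {R1 R2 : ℕ} [Nonempty (Fin R1)] [Nonempty (Fin R2)]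
    (K : Matrix (Fin R1) (Fin R2) ℝ) {C : ℝ}
    (h : ∀ i j k l, K i k * K j l / (K j k * K i l) ≤ C) : psiK K ≤ C :=
  ciSup_le fun i => ciSup_le fun j => ciSup_le fun k => ciSup_le fun l => h i j k l

lemma one_le_psiK {R1 R2 : ℕ} [Nonempty (Fin R1)] [Nonempty (Fin R2)]
    (K : Matrix (Fin R1) (Fin R2) ℝ) (hK : ∀ i j, 0 < K i j) : 1 ≤ psiK K := by
  have i0 : Fin R1 := Classical.arbitrary _
  have k0 : Fin R2 := Classical.arbitrary _
  have := le_psiK K i0 i0 k0 k0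
  rwa [div_self (ne_of_gt (mul_pos (hK i0 k0) (hK i0 k0)))] at this

lemma one_le_sqrt_psiK {R1 R2 : ℕ} [Nonempty (Fin R1)] [Nonempty (Fin R2)]
    (K : Matrix (Fin R1) (Fin R2) ℝ) (hK : ∀ i j, 0 < K i j) : 1 ≤ Real.sqrt (psiK K) := by
  rw [show (1:ℝ) = Real.sqrt 1 by simp]
  exact Real.sqrt_le_sqrt (one_le_psiK K hK)

lemma kappaK_nonneg {R1 R2 : ℕ} [Nonempty (Fin R1)] [Nonempty (Fin R2)]
    (K : Matrix (Fin R1) (Fin R2) ℝ) (hK : ∀ i j, 0 < K i j) : 0 ≤ kappaK K := by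
  have := one_le_sqrt_psiK K hK
  exact div_nonneg (by linarith) (by linarith)

lemma psiK_transpose {R1 R2 : ℕ} [Nonempty (Fin R1)] [Nonempty (Fin R2)]
    (K : Matrix (Fin R1) (Fin R2) ℝ) : psiK K.transpose = psiK K := by
  apply le_antisymm
  · refine psiK_le _ fun i j k l => ?_
    simpa only [Matrix.transpose_apply, mul_comm] using le_psiK K k l i j
  · refine psiK_le _ fun i j k l => ?_
    simpa only [Matrix.transpose_apply, mul_comm] using le_psiK K.transpose k l i j

lemma kappaK_transpose {R1 R2 : ℕ} [Nonempty (Fin R1)] [Nonempty (Fin R2)]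
    (K : Matrix (Fin R1) (Fin R2) ℝ) : kappaK K.transpose = kappaK K := by
  rw [kappaK, kappaK, psiK_transpose]

lemma half_step {R1 R2 : ℕ} [Nonempty (Fin R1)] [Nonempty (Fin R2)]
    (K : Matrix (Fin R1) (Fin R2) ℝ) (hK : ∀ i j, 0 < K i j)
    (x y : Fin R2 → ℝ) (hx : ∀ k, 0 < x k) (hy : ∀ k, 0 < y k) :
    varSeminorm (fun i => Real.log (K.mulVec x i) - Real.log (K.mulVec y i)) ≤
      kappaK K * varSeminorm (fun k => Real.log (x k) - Real.log (y k)) := by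
  set a : Fin R2 → ℝ := fun k => Real.log (x k) - Real.log (y k) with ha
  set Sf : Fin R1 → ℝ → ℝ := fun i s => ∑ k, K i k * y k * Real.exp (s * a k) with hSf
  have hSpos : ∀ i s, 0 < Sf i s := fun i s =>
    Finset.sum_pos (fun k _ => mul_pos (mul_pos (hK i k) (hy k)) (Real.exp_pos _))
      Finset.univ_nonempty
  have hmv : ∀ (w : Fin R2 → ℝ) i, K.mulVec w i = ∑ k, K i k * w k := by
    intro w i; simp [Matrix.mulVec, dotProduct]
  have hS0 : ∀ i, Sf i 0 = K.mulVec y i := by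
    intro i; rw [hmv]; simp [hSf]
  have hS1 : ∀ i, Sf i 1 = K.mulVec x i := by
    intro i
    rw [hmv, hSf]
    refine Finset.sum_congr rfl fun k _ => ?_
    simp only [one_mul, ha]
    rw [Real.exp_sub, Real.exp_log (hx k), Real.exp_log (hy k)]
    rw [mul_assoc, mul_div_cancel₀ _ (hy k).ne']
  have hderiv : ∀ i s, HasDerivAt (Sf i)
      (∑ k, K i k * y k * (Real.exp (s * a k) * a k)) s := by
    intro i s
    refine HasDerivAt.fun_sum fun k _ => ?_
    exact ((hasDerivAt_mul_const (a k)).exp).const_mul (K i k * y k)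
  set D : Fin R1 → ℝ → ℝ :=
    fun i s => (∑ k, K i k * y k * (Real.exp (s * a k) * a k)) / Sf i s with hD
  have hGderiv : ∀ i s, HasDerivAt (fun s => Real.log (Sf i s)) (D i s) s :=
    fun i s => (hderiv i s).log (hSpos i s).ne'
  have hbound : ∀ i j s, D i s - D j s ≤ kappaK K * varSeminorm a := by
    intro i j s
    set p : Fin R2 → ℝ := fun k => K i k * y k * Real.exp (s * a k) / Sf i s with hp'
    set q : Fin R2 → ℝ := fun k => K j k * y k * Real.exp (s * a k) / Sf j s with hq'
    have hp : ∀ k, 0 < p k := fun k =>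
      div_pos (mul_pos (mul_pos (hK i k) (hy k)) (Real.exp_pos _)) (hSpos i s)
    have hq : ∀ k, 0 < q k := fun k =>
      div_pos (mul_pos (mul_pos (hK j k) (hy k)) (Real.exp_pos _)) (hSpos j s)
    have hps : ∑ k, p k = 1 := by
      rw [hp', ← Finset.sum_div]; exact div_self (hSpos i s).ne'
    have hqs : ∑ k, q k = 1 := by
      rw [hq', ← Finset.sum_div]; exact div_self (hSpos j s).ne'
    have hψ : ∀ k l, p k * q l ≤ psiK K * (q k * p l) := by
      intro k l
      have hr := le_psiK K i j k l
      rw [div_le_iff₀ (mul_pos (hK j k) (hK i l))] at hr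
      have hfac : 0 ≤ y k * y l * Real.exp (s * a k) * Real.exp (s * a l) :=
        (mul_pos (mul_pos (mul_pos (hy k) (hy l)) (Real.exp_pos _)) (Real.exp_pos _)).le
      have h2 := mul_le_mul_of_nonneg_right hr hfac
      have h3 : (K i k * y k * Real.exp (s * a k)) * (K j l * y l * Real.exp (s * a l)) ≤
          psiK K * ((K j k * y k * Real.exp (s * a k)) * (K i l * y l * Real.exp (s * a l))) := by
        nlinarith [h2]
      have hden : (0:ℝ) < Sf i s * Sf j s := mul_pos (hSpos i s) (hSpos j s)
      have hden' : (0:ℝ) < Sf j s * Sf i s := mul_pos (hSpos j s) (hSpos i s)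
      have e1 : p k * q l = ((K i k * y k * Real.exp (s * a k)) *
          (K j l * y l * Real.exp (s * a l))) / (Sf i s * Sf j s) := by
        rw [hp', hq']; ring
      have e2 : psiK K * (q k * p l) = (psiK K * ((K j k * y k * Real.exp (s * a k)) *
          (K i l * y l * Real.exp (s * a l)))) / (Sf j s * Sf i s) := by
        rw [hq', hp']; ring
      rw [e1, e2, div_le_div_iff₀ hden hden']
      nlinarith [mul_le_mul_of_nonneg_right h3 hden.le]
    have key := avg_diff_le p q (psiK K) hp hq hps hqs hψ a
    have hDi : ∑ k, p k * a k = D i s := by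
      calc ∑ k, p k * a k
          = ∑ k, (K i k * y k * (Real.exp (s * a k) * a k)) / Sf i s :=
            Finset.sum_congr rfl fun k _ => by rw [hp']; ring
        _ = D i s := by rw [← Finset.sum_div, hD]
    have hDj : ∑ k, q k * a k = D j s := by
      calc ∑ k, q k * a k
          = ∑ k, (K j k * y k * (Real.exp (s * a k) * a k)) / Sf j s :=
            Finset.sum_congr rfl fun k _ => by rw [hq']; ring
        _ = D j s := by rw [← Finset.sum_div, hD]
    rw [hDi, hDj] at key
    exact key
  -- MVT step
  have hMVT : ∀ i j, (Real.log (K.mulVec x i) - Real.log (K.mulVec y i)) -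
      (Real.log (K.mulVec x j) - Real.log (K.mulVec y j)) ≤ kappaK K * varSeminorm a := by
    intro i j
    set G : ℝ → ℝ := fun s => Real.log (Sf i s) - Real.log (Sf j s) with hG'
    have hG : ∀ s, HasDerivAt G (D i s - D j s) s :=
      fun s => (hGderiv i s).sub (hGderiv j s)
    have hb : ∀ s : ℝ, s ∈ (Set.univ : Set ℝ) → ‖D i s - D j s‖ ≤ kappaK K * varSeminorm a := by
      intro s _
      rw [Real.norm_eq_abs, abs_sub_le_iff]
      exact ⟨hbound i j s, hbound j i s⟩
    have hmvt := Convex.norm_image_sub_le_of_norm_hasDerivWithin_le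
      (f := G) (f' := fun s => D i s - D j s) (C := kappaK K * varSeminorm a)
      (fun s _ => (hG s).hasDerivWithinAt) hb convex_univ (Set.mem_univ (0:ℝ)) (Set.mem_univ (1:ℝ))
    rw [Real.norm_eq_abs] at hmvt
    have h01 : ‖(1:ℝ) - 0‖ = 1 := by norm_num
    rw [h01, mul_one] at hmvt
    have hG1 : G 1 = Real.log (K.mulVec x i) - Real.log (K.mulVec x j) := by
      show Real.log (Sf i 1) - Real.log (Sf j 1) = _
      rw [hS1 i, hS1 j]
    have hG0 : G 0 = Real.log (K.mulVec y i) - Real.log (K.mulVec y j) := by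
      show Real.log (Sf i 0) - Real.log (Sf j 0) = _
      rw [hS0 i, hS0 j]
    have := le_trans (le_abs_self _) hmvt
    rw [hG1, hG0] at this
    linarith
  exact varSeminorm_le fun i j => by
    have := hMVT i j; linarith

/-- Convergence rate of the Sinkhorn gradient (Proposition 4.3): along the Sinkhorn
iterations with positive kernel `K` and positive probability marginals `μ, ν`,
converging to the fixed point `(u*, v*)`, the approximate gradient
`g^{(t)} = ε log v^{(t)}` satisfies
`‖g^{(t+1)} - g‖_var / ‖g^{(t)} - g‖_var ≤ κ(K)²` whenever `‖g^{(t)} - g‖_var > 0`,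
where `g = ε log v*`. -/
theorem sinkhorn_gradient_convergence_rate {R1 R2 : ℕ}
    [Nonempty (Fin R1)] [Nonempty (Fin R2)]
    (K : Matrix (Fin R1) (Fin R2) ℝ) (hK : ∀ i j, 0 < K i j)
    (μ : Fin R1 → ℝ) (ν : Fin R2 → ℝ)
    (hμpos : ∀ m, 0 < μ m) (hνpos : ∀ n, 0 < ν n)
    (hμsum : ∑ m, μ m = 1) (hνsum : ∑ n, ν n = 1)
    (u : ℕ → Fin R1 → ℝ) (v : ℕ → Fin R2 → ℝ)
    (hupos : ∀ t m, 0 < u t m) (hvpos : ∀ t n, 0 < v t n)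
    (hiter_u : ∀ t m, u (t + 1) m = μ m / K.mulVec (v t) m)
    (hiter_v : ∀ t n, v (t + 1) n = ν n / K.transpose.mulVec (u (t + 1)) n)
    (ustar : Fin R1 → ℝ) (vstar : Fin R2 → ℝ)
    (hustar_pos : ∀ m, 0 < ustar m) (hvstar_pos : ∀ n, 0 < vstar n)
    (hustar : ∀ m, ustar m = μ m / K.mulVec vstar m)
    (hvstar : ∀ n, vstar n = ν n / K.transpose.mulVec ustar n)
    (hconv_u : Filter.Tendsto u Filter.atTop (nhds ustar))
    (hconv_v : Filter.Tendsto v Filter.atTop (nhds vstar))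
    (ε : ℝ) (hε : 0 < ε) :
    ∀ t : ℕ,
      0 < varSeminorm (fun n => ε * Real.log (v t n) - ε * Real.log (vstar n)) →
      varSeminorm (fun n => ε * Real.log (v (t + 1) n) - ε * Real.log (vstar n)) /
          varSeminorm (fun n => ε * Real.log (v t n) - ε * Real.log (vstar n)) ≤
        kappaK K ^ 2 := by
  intro t hpos
  have hκ0 : 0 ≤ kappaK K := kappaK_nonneg K hK
  have hKT : ∀ i j, 0 < K.transpose i j := fun i j => hK j i
  have hKv : ∀ (w : Fin R2 → ℝ), (∀ n, 0 < w n) → ∀ m, 0 < K.mulVec w m := by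
    intro w hw m
    have : K.mulVec w m = ∑ k, K m k * w k := by simp [Matrix.mulVec, dotProduct]
    rw [this]
    exact Finset.sum_pos (fun k _ => mul_pos (hK m k) (hw k)) Finset.univ_nonempty
  have hKTu : ∀ (w : Fin R1 → ℝ), (∀ m, 0 < w m) → ∀ n, 0 < K.transpose.mulVec w n := by
    intro w hw n
    have : K.transpose.mulVec w n = ∑ m, K.transpose n m * w m := by
      simp [Matrix.mulVec, dotProduct]
    rw [this]
    exact Finset.sum_pos (fun m _ => mul_pos (hKT n m) (hw m)) Finset.univ_nonempty
  have hv1 : (fun n => Real.log (v (t+1) n) - Real.log (vstar n))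
      = fun n => Real.log (K.transpose.mulVec ustar n)
          - Real.log (K.transpose.mulVec (u (t+1)) n) := by
    funext n
    rw [hiter_v t n, hvstar n,
      Real.log_div (hνpos n).ne' (hKTu (u (t+1)) (hupos (t+1)) n).ne',
      Real.log_div (hνpos n).ne' (hKTu ustar hustar_pos n).ne']
    ring
  have hu1 : (fun m => Real.log (ustar m) - Real.log (u (t+1) m))
      = fun m => Real.log (K.mulVec (v t) m) - Real.log (K.mulVec vstar m) := by
    funext m
    rw [hiter_u t m, hustar m,
      Real.log_div (hμpos m).ne' (hKv (v t) (hvpos t) m).ne',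
      Real.log_div (hμpos m).ne' (hKv vstar hvstar_pos m).ne']
    ring
  have step1 := half_step K.transpose hKT ustar (u (t+1)) hustar_pos (hupos (t+1))
  have step2 := half_step K hK (v t) vstar (hvpos t) hvstar_pos
  rw [kappaK_transpose, hu1] at step1
  have core : varSeminorm (fun n => Real.log (v (t+1) n) - Real.log (vstar n)) ≤
      kappaK K ^ 2 * varSeminorm (fun n => Real.log (v t n) - Real.log (vstar n)) := by
    rw [hv1]
    calc varSeminorm (fun n => Real.log (K.transpose.mulVec ustar n)
            - Real.log (K.transpose.mulVec (u (t+1)) n))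
        ≤ kappaK K * varSeminorm (fun m => Real.log (K.mulVec (v t) m)
            - Real.log (K.mulVec vstar m)) := step1
      _ ≤ kappaK K * (kappaK K *
            varSeminorm (fun n => Real.log (v t n) - Real.log (vstar n))) :=
          mul_le_mul_of_nonneg_left step2 hκ0
      _ = kappaK K ^ 2 * varSeminorm (fun n => Real.log (v t n) - Real.log (vstar n)) := by
          ring
  have e_t : (fun n => ε * Real.log (v t n) - ε * Real.log (vstar n))
      = fun n => ε * (Real.log (v t n) - Real.log (vstar n)) := funext fun n => by ring
  have e_t1 : (fun n => ε * Real.log (v (t+1) n) - ε * Real.log (vstar n))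
      = fun n => ε * (Real.log (v (t+1) n) - Real.log (vstar n)) := funext fun n => by ring
  rw [e_t, varSeminorm_const_mul _ hε.le] at hpos
  rw [e_t, e_t1, varSeminorm_const_mul _ hε.le, varSeminorm_const_mul _ hε.le,
    div_le_iff₀ hpos]
  have hV := mul_le_mul_of_nonneg_left core hε.le
  nlinarith [hV]
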